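/- The map γ : W × W → ℂ defined on basis elements of the Witt algebra by γ(l_n, l_m) = (1/12)(n³ − n) δ_{n+m,0} and extended bilinearly is a Lie algebra two-cocycle: it is antisymmetric and satisfies γ([a,b],c) + γ([b,c],a) + γ([c,a],b) = 0. -/

import Mathlib

/-- The Witt algebra, modelled as `ℤ →₀ ℂ` with basis `l_n = single n 1`, with its bracket
`[l_n, l_m] = (m - n) l_{n+m}` as a bilinear map. -/
noncomputable def wittBracket : (ℤ →₀ ℂ) →ₗ[ℂ] (ℤ →₀ ℂ) →ₗ[ℂ] (ℤ →₀ ℂ) :=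
  Finsupp.lsum ℂ fun n =>
    LinearMap.toSpanSingleton ℂ ((ℤ →₀ ℂ) →ₗ[ℂ] (ℤ →₀ ℂ))
      (Finsupp.lsum ℂ fun m => ((m : ℂ) - (n : ℂ)) • Finsupp.lsingle (n + m))

/-- The Virasoro cocycle `γ(l_n, l_m) = (1/12)(n³ − n) δ_{n+m,0}`, extended bilinearly. -/
noncomputable def virasoroCocycle : (ℤ →₀ ℂ) →ₗ[ℂ] (ℤ →₀ ℂ) →ₗ[ℂ] ℂ :=
  Finsupp.lsum ℂ fun n =>
    LinearMap.toSpanSingleton ℂ ((ℤ →₀ ℂ) →ₗ[ℂ] ℂ)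
      (Finsupp.lsum ℂ fun m =>
        LinearMap.toSpanSingleton ℂ ℂ
          (if n + m = 0 then ((n : ℂ) ^ 3 - (n : ℂ)) / 12 else 0))

/-- Value of the Virasoro cocycle on (scaled) basis vectors. -/
lemma vc_single (n m : ℤ) (x y : ℂ) :
    virasoroCocycle (Finsupp.single n x) (Finsupp.single m y) =
      x * y * (if n + m = 0 then ((n:ℂ)^3 - n)/12 else 0) := by
  rw [virasoroCocycle, Finsupp.lsum_single, LinearMap.toSpanSingleton_apply,
    LinearMap.smul_apply, Finsupp.lsum_single, LinearMap.toSpanSingleton_apply]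
  simp only [smul_eq_mul]; ring

/-- Value of the Witt bracket on (scaled) basis vectors. -/
lemma wb_single (n m : ℤ) (x y : ℂ) :
    wittBracket (Finsupp.single n x) (Finsupp.single m y) =
      Finsupp.single (n+m) (x * y * ((m:ℂ) - n)) := by
  rw [wittBracket, Finsupp.lsum_single, LinearMap.toSpanSingleton_apply,
    LinearMap.smul_apply, Finsupp.lsum_single]
  simp only [LinearMap.smul_apply, Finsupp.lsingle_apply, Finsupp.smul_single, smul_eq_mul]
  ring_nf

/-- The Virasoro cocycle is a Lie algebra two-cocycle on the Witt algebra: it is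
antisymmetric and satisfies the cocycle identity. -/
theorem virasoroCocycle_is_two_cocycle :
    (∀ a b : ℤ →₀ ℂ, virasoroCocycle a b = - virasoroCocycle b a) ∧
    (∀ a b c : ℤ →₀ ℂ,
      virasoroCocycle (wittBracket a b) c + virasoroCocycle (wittBracket b c) a
        + virasoroCocycle (wittBracket c a) b = 0) := by
  constructor
  · intro a b
    induction a using Finsupp.induction_linear with
    | zero => simp
    | add f g hf hg =>
      simp only [map_add, LinearMap.add_apply, hf, hg]; ring
    | single n x =>
      induction b using Finsupp.induction_linear with
      | zero => simp
      | add f g hf hg =>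
        simp only [map_add, LinearMap.add_apply, hf, hg]; ring
      | single m y =>
        rw [vc_single, vc_single]
        by_cases h : n + m = 0
        · have hm : m = -n := by omega
          subst hm
          simp only [h, if_pos, add_neg_cancel, neg_add_cancel, if_true]
          push_cast; ring
        · have h2 : ¬ (m + n = 0) := by omega
          simp [h, h2]
  · intro a b c
    induction a using Finsupp.induction_linear with
    | zero => simp
    | add f g hf hg =>
      simp only [map_add, LinearMap.add_apply]
      linear_combination hf + hg
    | single n x =>
      induction b using Finsupp.induction_linear with
      | zero => simp
      | add f g hf hg =>
        simp only [map_add, LinearMap.add_apply]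
        linear_combination hf + hg
      | single m y =>
        induction c using Finsupp.induction_linear with
        | zero => simp
        | add f g hf hg =>
          simp only [map_add, LinearMap.add_apply]
          linear_combination hf + hg
        | single k z =>
          rw [wb_single, wb_single, wb_single, vc_single, vc_single, vc_single]
          by_cases h : n + m + k = 0
          · have hk : k = -n - m := by omega
            subst hk
            have e1 : n + m + (-n - m) = 0 := by ring
            have e2 : m + (-n - m) + n = 0 := by ring
            have e3 : -n - m + n + m = 0 := by ring
            rw [if_pos e1, if_pos e2, if_pos e3]
            push_cast; ring
          · have e1 : ¬ (n + m + k = 0) := h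
            have e2 : ¬ (m + k + n = 0) := by omega
            have e3 : ¬ (k + n + m = 0) := by omega
            rw [if_neg e1, if_neg e2, if_neg e3]
            ring
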